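/- Under the change of variables t1 = t̂2, t2 = log t̂1 (for t̂1 > 0), the prepotentials F(t1,t2) = (1/2)(t1)^2 t2 + e^{t2} and F̂(t̂1,t̂2) = (1/2)(t̂2)^2 t̂1 + (1/2)(t̂1)^2(log t̂1 − 3/2) satisfy the Legendre transformation relations: t̂_α = ∂_{t^α}∂_{t^2}F (i.e., t̂2 = ∂_{t1}∂_{t2}F = t1 and t̂1 = ∂_{t2}∂_{t2}F = e^{t2}, where indices are lowered with η_{12}=η_{21}=1), and the second derivative matrices agree: ∂²F̂/∂t̂^α∂t̂^β = ∂²F/∂t^α∂t^β for all α,β. -/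

import Mathlib

noncomputable def pd (i : Fin 2) (f : ℝ → ℝ → ℝ) : ℝ → ℝ → ℝ :=
  fun x y => if i = 0 then deriv (fun s => f s y) x else deriv (fun s => f x s) y

noncomputable def F : ℝ → ℝ → ℝ := fun t1 t2 => (1/2) * t1^2 * t2 + Real.exp t2

noncomputable def Fhat : ℝ → ℝ → ℝ :=
  fun t1 t2 => (1/2) * t2^2 * t1 + (1/2) * t1^2 * (Real.log t1 - 3/2)

lemma pd0_eq (f : ℝ → ℝ → ℝ) (x y : ℝ) : pd 0 f x y = deriv (fun s => f s y) x := rfl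

lemma pd1_eq (f : ℝ → ℝ → ℝ) (x y : ℝ) : pd 1 f x y = deriv (fun s => f x s) y := rfl

lemma pd0F (x y : ℝ) : pd 0 F x y = x * y := by
  have h : HasDerivAt (fun s : ℝ => (1/2) * s^2 * y + Real.exp y) (x * y) x := by
    have := (((hasDerivAt_pow 2 x).const_mul (1/2:ℝ)).mul_const y).add_const (Real.exp y)
    refine this.congr_deriv ?_; push_cast; ring
  rw [pd0_eq]; exact h.deriv

lemma pd1F (x y : ℝ) : pd 1 F x y = (1/2) * x^2 + Real.exp y := by
  have h : HasDerivAt (fun s : ℝ => (1/2) * x^2 * s + Real.exp s)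
      ((1/2) * x^2 + Real.exp y) y := by
    have := ((hasDerivAt_id y).const_mul ((1/2) * x^2)).add (Real.hasDerivAt_exp y)
    refine this.congr_deriv ?_; ring
  rw [pd1_eq]; exact h.deriv

lemma pd1Fhat (x y : ℝ) : pd 1 Fhat x y = x * y := by
  have h : HasDerivAt (fun s : ℝ => (1/2) * s^2 * x + (1/2) * x^2 * (Real.log x - 3/2))
      (x * y) y := by
    have := (((hasDerivAt_pow 2 y).const_mul (1/2:ℝ)).mul_const x).add_const
      ((1/2) * x^2 * (Real.log x - 3/2))
    refine this.congr_deriv ?_; push_cast; ring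
  rw [pd1_eq]; exact h.deriv

lemma pd0Fhat (x y : ℝ) (hx : 0 < x) :
    pd 0 Fhat x y = (1/2) * y^2 + x * Real.log x - x := by
  have h : HasDerivAt (fun s : ℝ => (1/2) * y^2 * s + (1/2) * s^2 * (Real.log s - 3/2))
      ((1/2) * y^2 + x * Real.log x - x) x := by
    have h1 : HasDerivAt (fun s : ℝ => (1/2) * y^2 * s) ((1/2) * y^2) x := by
      have := (hasDerivAt_id x).const_mul ((1/2) * y^2)
      refine this.congr_deriv ?_; ring
    have h2 : HasDerivAt (fun s : ℝ => (1/2) * s^2 * (Real.log s - 3/2))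
        (x * Real.log x - x - ((1/2) * y^2 + x * Real.log x - x - (1/2) * y^2 - (x * Real.log x - x)) ) x := by
      have hp : HasDerivAt (fun s : ℝ => (1/2) * s^2) x x := by
        have := (hasDerivAt_pow 2 x).const_mul (1/2:ℝ)
        refine this.congr_deriv ?_; push_cast; ring
      have hl : HasDerivAt (fun s : ℝ => Real.log s - 3/2) x⁻¹ x :=
        (Real.hasDerivAt_log hx.ne').sub_const (3/2)
      have := hp.mul hl
      refine this.congr_deriv ?_
      field_simp
      ring
    have := h1.add h2
    refine this.congr_deriv ?_; ring
  rw [pd0_eq]; exact h.deriv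

/-- The Legendre transformation `S₂` relating `F` and `F̂` under `t̂1 = e^{t2}`, `t̂2 = t1`:
`t̂₂ = ∂₁∂₂F = t1`, `t̂₁ = ∂₂∂₂F = e^{t2}` (indices lowered with the off-diagonal metric),
and the Hessians of `F` and `F̂` agree at corresponding points. -/
theorem stmt2 :
    ∀ t1 t2 : ℝ,
      pd 0 (pd 1 F) t1 t2 = t1 ∧
      pd 1 (pd 1 F) t1 t2 = Real.exp t2 ∧
      ∀ α β : Fin 2, pd α (pd β Fhat) (Real.exp t2) t1 = pd α (pd β F) t1 t2 := by
  intro t1 t2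
  have he : (0:ℝ) < Real.exp t2 := Real.exp_pos t2
  have F00 : pd 0 (pd 0 F) t1 t2 = t2 := by
    have hfun : (fun s => pd 0 F s t2) = fun s => s * t2 := funext fun s => pd0F s t2
    rw [pd0_eq, hfun]
    simpa using ((hasDerivAt_id t1).mul_const t2).deriv
  have F01 : pd 0 (pd 1 F) t1 t2 = t1 := by
    have hfun : (fun s => pd 1 F s t2) = fun s => (1/2) * s^2 + Real.exp t2 :=
      funext fun s => pd1F s t2
    have h : HasDerivAt (fun s : ℝ => (1/2) * s^2 + Real.exp t2) t1 t1 := by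
      have := ((hasDerivAt_pow 2 t1).const_mul (1/2:ℝ)).add_const (Real.exp t2)
      refine this.congr_deriv ?_; push_cast; ring
    rw [pd0_eq, hfun]; exact h.deriv
  have F10 : pd 1 (pd 0 F) t1 t2 = t1 := by
    have hfun : (fun s => pd 0 F t1 s) = fun s => t1 * s := funext fun s => pd0F t1 s
    rw [pd1_eq, hfun]
    simpa using ((hasDerivAt_id t2).const_mul t1).deriv
  have F11 : pd 1 (pd 1 F) t1 t2 = Real.exp t2 := by
    have hfun : (fun s => pd 1 F t1 s) = fun s => (1/2) * t1^2 + Real.exp s :=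
      funext fun s => pd1F t1 s
    rw [pd1_eq, hfun]
    simpa using ((Real.hasDerivAt_exp t2).const_add ((1/2) * t1^2)).deriv
  have ev : (fun s => pd 0 Fhat s t1) =ᶠ[nhds (Real.exp t2)]
      (fun s => (1/2) * t1^2 + s * Real.log s - s) := by
    filter_upwards [eventually_gt_nhds he] with s hs
    exact pd0Fhat s t1 hs
  have Fh00 : pd 0 (pd 0 Fhat) (Real.exp t2) t1 = t2 := by
    have h : HasDerivAt (fun s : ℝ => (1/2) * t1^2 + s * Real.log s - s)
        t2 (Real.exp t2) := by
      have hml : HasDerivAt (fun s : ℝ => s * Real.log s)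
          (Real.log (Real.exp t2) + 1) (Real.exp t2) := by
        have := (hasDerivAt_id (Real.exp t2)).mul (Real.hasDerivAt_log he.ne')
        refine this.congr_deriv ?_
        field_simp
        simp only [id_eq]; ring
      have := (hml.const_add ((1/2) * t1^2)).sub (hasDerivAt_id (Real.exp t2))
      refine this.congr_deriv ?_
      rw [Real.log_exp]; ring
    rw [pd0_eq, ev.deriv_eq]; exact h.deriv
  have Fh10 : pd 1 (pd 0 Fhat) (Real.exp t2) t1 = t1 := by
    have hfun : (fun s => pd 0 Fhat (Real.exp t2) s) =
        fun s => (1/2) * s^2 + Real.exp t2 * Real.log (Real.exp t2) - Real.exp t2 :=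
      funext fun s => pd0Fhat (Real.exp t2) s he
    have h : HasDerivAt
        (fun s : ℝ => (1/2) * s^2 + Real.exp t2 * Real.log (Real.exp t2) - Real.exp t2)
        t1 t1 := by
      have := (((hasDerivAt_pow 2 t1).const_mul (1/2:ℝ)).add_const
        (Real.exp t2 * Real.log (Real.exp t2))).sub_const (Real.exp t2)
      refine this.congr_deriv ?_; push_cast; ring
    rw [pd1_eq, hfun]; exact h.deriv
  have Fh01 : pd 0 (pd 1 Fhat) (Real.exp t2) t1 = t1 := by
    have hfun : (fun s => pd 1 Fhat s t1) = fun s => s * t1 := funext fun s => pd1Fhat s t1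
    rw [pd0_eq, hfun]
    simpa using ((hasDerivAt_id (Real.exp t2)).mul_const t1).deriv
  have Fh11 : pd 1 (pd 1 Fhat) (Real.exp t2) t1 = Real.exp t2 := by
    have hfun : (fun s => pd 1 Fhat (Real.exp t2) s) = fun s => Real.exp t2 * s :=
      funext fun s => pd1Fhat (Real.exp t2) s
    rw [pd1_eq, hfun]
    simpa using ((hasDerivAt_id t1).const_mul (Real.exp t2)).deriv
  refine ⟨F01, F11, ?_⟩
  intro α β
  fin_cases α <;> fin_cases β <;>
    simp only [Fin.zero_eta, Fin.mk_one, Fh00, Fh01, Fh10, Fh11, F00, F01, F10, F11]
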